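/- Assume a0 + b0 > 1 and all entries of W0 are strictly positive. For t ≥ t0 (where μ_{t0} = μ0 in the family μ_t(x,y) = μ0^p(x,y) + (−1)^{x+y} t), the KL divergence D(μ_t ‖ μ0^p) is monotonically nondecreasing in t; hence inf_{t ≥ t0} D(μ_t ‖ μ0^p) = D(μ0 ‖ μ0^p) = I(U, W0). -/

import Mathlib

open Finset Real

/-- The binary channel with parameters `(a,b)`: `ch a b x y = W(y|x)`,
with `W(0|0) = a`, `W(1|1) = b`. -/
noncomputable def ch (a b : ℝ) : Fin 2 → Fin 2 → ℝ := fun x y =>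
  if x = 0 then (if y = 0 then a else 1 - a) else (if y = 0 then 1 - b else b)

/-- The joint distribution `μ(x,y) = (1/2) W(y|x)` of a uniform input through
the channel `(a,b)`. -/
noncomputable def jointU (a b : ℝ) : Fin 2 → Fin 2 → ℝ := fun x y => (1/2) * ch a b x y

/-- The product of the marginals of a joint distribution `μ` on `{0,1}²`. -/
noncomputable def pm (μ : Fin 2 → Fin 2 → ℝ) : Fin 2 → Fin 2 → ℝ :=
  fun x y => (∑ v, μ x v) * (∑ u, μ u y)

/-- `μ` is a joint probability distribution on `{0,1}²`. -/
def IsDist (μ : Fin 2 → Fin 2 → ℝ) : Prop :=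
  (∀ x y, 0 ≤ μ x y) ∧ ∑ x, ∑ y, μ x y = 1

/-- KL divergence `D(μ ‖ ν)` on `{0,1}²`, with the convention `0 · log 0 = 0`
(note `Real.log 0 = 0`). -/
noncomputable def kl (μ ν : Fin 2 → Fin 2 → ℝ) : ℝ :=
  ∑ x, ∑ y, μ x y * Real.log (μ x y / ν x y)

/-- `E_μ[log W] = ∑_{x,y} μ(x,y) log W(y|x)`. -/
noncomputable def elog (μ W : Fin 2 → Fin 2 → ℝ) : ℝ :=
  ∑ x, ∑ y, μ x y * Real.log (W x y)

/-- The one-parameter family `μ_t(x,y) = μ0^p(x,y) + (−1)^{x+y} t` of measures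
sharing the marginals of the uniform-input joint `μ0` of the channel `(a,b)`. -/
noncomputable def lineDist (a b t : ℝ) : Fin 2 → Fin 2 → ℝ := fun x y =>
  pm (jointU a b) x y + (if x = y then t else -t)

noncomputable def phi4 (c d t : ℝ) : ℝ :=
  (c+t)*Real.log (c+t) + (c-t)*Real.log (c-t) + (d+t)*Real.log (d+t) + (d-t)*Real.log (d-t)

lemma phi4_deriv (c d t : ℝ) (h1 : (0:ℝ) < c + t) (h2 : (0:ℝ) < c - t)
    (h3 : (0:ℝ) < d + t) (h4 : (0:ℝ) < d - t) :
    HasDerivAt (phi4 c d)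
      ((Real.log (c+t) - Real.log (c-t)) + (Real.log (d+t) - Real.log (d-t))) t := by
  have D1 : HasDerivAt (fun t => (c+t)*Real.log (c+t)) ((Real.log (c+t)+1)*1) t :=
    (Real.hasDerivAt_mul_log h1.ne').comp t ((hasDerivAt_id t).const_add c)
  have D2 : HasDerivAt (fun t => (c-t)*Real.log (c-t)) ((Real.log (c-t)+1)*(-1)) t :=
    (Real.hasDerivAt_mul_log h2.ne').comp t ((hasDerivAt_id t).neg.const_add c)
  have D3 : HasDerivAt (fun t => (d+t)*Real.log (d+t)) ((Real.log (d+t)+1)*1) t :=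
    (Real.hasDerivAt_mul_log h3.ne').comp t ((hasDerivAt_id t).const_add d)
  have D4 : HasDerivAt (fun t => (d-t)*Real.log (d-t)) ((Real.log (d-t)+1)*(-1)) t :=
    (Real.hasDerivAt_mul_log h4.ne').comp t ((hasDerivAt_id t).neg.const_add d)
  have := ((D1.add D2).add D3).add D4
  convert this using 1
  · rfl
  · rfl
  · rfl
  · ring

lemma phi4_mono (c d t0 : ℝ) (ht0 : 0 ≤ t0) :
    MonotoneOn (phi4 c d) (Set.Icc t0 (min c d)) := by
  have pos : ∀ t ∈ interior (Set.Icc t0 (min c d)),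
      (0:ℝ) < c + t ∧ (0:ℝ) < c - t ∧ (0:ℝ) < d + t ∧ (0:ℝ) < d - t := by
    intro t ht
    rw [interior_Icc] at ht
    have hcc := lt_of_lt_of_le ht.2 (min_le_left c d)
    have hdd := lt_of_lt_of_le ht.2 (min_le_right c d)
    have := ht.1
    refine ⟨by linarith, by linarith, by linarith, by linarith⟩
  apply monotoneOn_of_deriv_nonneg (convex_Icc _ _)
  · apply ContinuousOn.add; apply ContinuousOn.add; apply ContinuousOn.add
    all_goals
      exact (Real.continuous_mul_log.comp (by continuity)).continuousOn
  · intro t ht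
    obtain ⟨h1, h2, h3, h4⟩ := pos t ht
    exact (phi4_deriv c d t h1 h2 h3 h4).differentiableAt.differentiableWithinAt
  · intro t ht
    obtain ⟨h1, h2, h3, h4⟩ := pos t ht
    rw [(phi4_deriv c d t h1 h2 h3 h4).deriv]
    rw [interior_Icc] at ht
    have ht' : 0 < t := lt_of_le_of_lt ht0 ht.1
    have l1 : Real.log (c - t) ≤ Real.log (c + t) := Real.log_le_log h2 (by linarith)
    have l2 : Real.log (d - t) ≤ Real.log (d + t) := Real.log_le_log h4 (by linarith)
    linarith

lemma mul_log_div' (u v : ℝ) (hu : 0 ≤ u) (hv : 0 < v) :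
    u * Real.log (u / v) = u * Real.log u - u * Real.log v := by
  rcases eq_or_lt_of_le hu with h | h
  · simp [← h]
  · rw [Real.log_div h.ne' hv.ne']; ring


/-- For `a0 + b0 > 1` and `t0 = μ0(0,0) − μ0^p(0,0)` (so `μ_{t0} = μ0`), the
divergence `t ↦ D(μ_t ‖ μ0^p)` is nondecreasing on `{t ≥ t0}` (within the
valid range), hence its infimum there is `D(μ0 ‖ μ0^p) = I(U, W0)`. -/
theorem stmt_19 (a0 b0 : ℝ)
    (ha0 : a0 ∈ Set.Ioo (0:ℝ) 1) (hb0 : b0 ∈ Set.Ioo (0:ℝ) 1) (h : 1 < a0 + b0) :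
    MonotoneOn (fun t => kl (lineDist a0 b0 t) (pm (jointU a0 b0)))
      {t : ℝ | jointU a0 b0 0 0 - pm (jointU a0 b0) 0 0 ≤ t ∧
        ∀ x y, 0 ≤ lineDist a0 b0 t x y} ∧
    sInf {r : ℝ | ∃ t : ℝ, jointU a0 b0 0 0 - pm (jointU a0 b0) 0 0 ≤ t ∧
        (∀ x y, 0 ≤ lineDist a0 b0 t x y) ∧
        r = kl (lineDist a0 b0 t) (pm (jointU a0 b0))}
      = kl (jointU a0 b0) (pm (jointU a0 b0)) := by
  obtain ⟨ha1, ha2⟩ := ha0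
  obtain ⟨hb1, hb2⟩ := hb0
  set c : ℝ := (a0 + 1 - b0)/4 with hc_def
  set d : ℝ := (1 - a0 + b0)/4 with hd_def
  set t0 : ℝ := (a0 + b0 - 1)/4 with ht0_def
  have hc : 0 < c := by rw [hc_def]; linarith
  have hd : 0 < d := by rw [hd_def]; linarith
  have ht0 : 0 < t0 := by rw [ht0_def]; linarith
  have ht0c : t0 < c := by rw [ht0_def, hc_def]; linarith
  have ht0d : t0 < d := by rw [ht0_def, hd_def]; linarith
  -- pm entries
  have hp00 : pm (jointU a0 b0) 0 0 = c := by
    simp [pm, jointU, ch, Fin.sum_univ_two, hc_def]; ring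
  have hp01 : pm (jointU a0 b0) 0 1 = d := by
    simp [pm, jointU, ch, Fin.sum_univ_two, hd_def]; ring
  have hp10 : pm (jointU a0 b0) 1 0 = c := by
    simp [pm, jointU, ch, Fin.sum_univ_two, hc_def]; ring
  have hp11 : pm (jointU a0 b0) 1 1 = d := by
    simp [pm, jointU, ch, Fin.sum_univ_two, hd_def]; ring
  -- lineDist entries
  have hl00 : ∀ t, lineDist a0 b0 t 0 0 = c + t := by
    intro t; simp [lineDist, hp00]
  have hl01 : ∀ t, lineDist a0 b0 t 0 1 = d - t := by
    intro t; simp [lineDist, hp01]; ring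
  have hl10 : ∀ t, lineDist a0 b0 t 1 0 = c - t := by
    intro t; simp [lineDist, hp10]; ring
  have hl11 : ∀ t, lineDist a0 b0 t 1 1 = d + t := by
    intro t; simp [lineDist, hp11]
  have ht0eq : jointU a0 b0 0 0 - pm (jointU a0 b0) 0 0 = t0 := by
    rw [hp00]; simp [jointU, ch, ht0_def, hc_def]; ring
  -- set equality
  have hmem : ∀ t : ℝ, (t ∈ {t : ℝ | jointU a0 b0 0 0 - pm (jointU a0 b0) 0 0 ≤ t ∧
      ∀ x y, 0 ≤ lineDist a0 b0 t x y}) ↔ t ∈ Set.Icc t0 (min c d) := by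
    intro t
    constructor
    · rintro ⟨h1, h2⟩
      rw [ht0eq] at h1
      have e1 := h2 0 1; rw [hl01] at e1
      have e2 := h2 1 0; rw [hl10] at e2
      exact ⟨h1, le_min (by linarith) (by linarith)⟩
    · rintro ⟨h1, h2⟩
      have hcc := le_trans h2 (min_le_left c d)
      have hdd := le_trans h2 (min_le_right c d)
      refine ⟨by rw [ht0eq]; exact h1, ?_⟩
      simp only [Fin.forall_fin_two]
      refine ⟨⟨?_, ?_⟩, ?_, ?_⟩
      · rw [hl00]; linarith
      · rw [hl01]; linarith
      · rw [hl10]; linarith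
      · rw [hl11]; linarith
  -- kl formula
  have hklt : ∀ t : ℝ, (∀ x y, (0:ℝ) ≤ lineDist a0 b0 t x y) →
      kl (lineDist a0 b0 t) (pm (jointU a0 b0))
        = phi4 c d t - (2*c*Real.log c + 2*d*Real.log d) := by
    intro t hnn
    have n00 := hnn 0 0; rw [hl00] at n00
    have n01 := hnn 0 1; rw [hl01] at n01
    have n10 := hnn 1 0; rw [hl10] at n10
    have n11 := hnn 1 1; rw [hl11] at n11
    simp only [kl, Fin.sum_univ_two, hl00 t, hl01 t, hl10 t, hl11 t,
      hp00, hp01, hp10, hp11]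
    rw [mul_log_div' _ _ n00 hc, mul_log_div' _ _ n01 hd,
      mul_log_div' _ _ n10 hc, mul_log_div' _ _ n11 hd]
    simp only [phi4]; ring
  -- lineDist at t0 equals jointU
  have hjoint : lineDist a0 b0 t0 = jointU a0 b0 := by
    have H : ∀ x y, lineDist a0 b0 t0 x y = jointU a0 b0 x y := by
      simp only [Fin.forall_fin_two]
      refine ⟨⟨?_, ?_⟩, ?_, ?_⟩
      · rw [hl00]; simp [jointU, ch]; rw [hc_def, ht0_def]; ring
      · rw [hl01]; simp [jointU, ch]; rw [hd_def, ht0_def]; ring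
      · rw [hl10]; simp [jointU, ch]; rw [hc_def, ht0_def]; ring
      · rw [hl11]; simp [jointU, ch]; rw [hd_def, ht0_def]; ring
    funext x y; exact H x y
  -- monotonicity
  have hmono : MonotoneOn (fun t => kl (lineDist a0 b0 t) (pm (jointU a0 b0)))
      {t : ℝ | jointU a0 b0 0 0 - pm (jointU a0 b0) 0 0 ≤ t ∧
        ∀ x y, 0 ≤ lineDist a0 b0 t x y} := by
    intro x hx y hy hxy
    have hx' := (hmem x).mp hx
    have hy' := (hmem y).mp hy
    simp only
    rw [hklt x hx.2, hklt y hy.2]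
    exact sub_le_sub_right (phi4_mono c d t0 ht0.le hx' hy' hxy) _
  refine ⟨hmono, ?_⟩
  have ht0S : t0 ∈ {t : ℝ | jointU a0 b0 0 0 - pm (jointU a0 b0) 0 0 ≤ t ∧
      ∀ x y, 0 ≤ lineDist a0 b0 t x y} :=
    (hmem t0).mpr ⟨le_refl _, le_min ht0c.le ht0d.le⟩
  apply IsLeast.csInf_eq
  constructor
  · exact ⟨t0, ht0S.1, ht0S.2, by rw [hjoint]⟩
  · rintro r ⟨t, h1, h2, rfl⟩
    have htS : t ∈ {t : ℝ | jointU a0 b0 0 0 - pm (jointU a0 b0) 0 0 ≤ t ∧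
        ∀ x y, 0 ≤ lineDist a0 b0 t x y} := ⟨h1, h2⟩
    have hle : t0 ≤ t := by rw [ht0eq] at h1; exact h1
    calc kl (jointU a0 b0) (pm (jointU a0 b0))
        = kl (lineDist a0 b0 t0) (pm (jointU a0 b0)) := by rw [hjoint]
      _ ≤ kl (lineDist a0 b0 t) (pm (jointU a0 b0)) := hmono ht0S htS hle
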